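/- For any set A ⊆ ℕ of positive integers, the upper Banach logarithmic density of A is at most the upper Banach density of A: ℓBD(A) ≤ BD(A). -/
import Mathlib

open Filter

/-- The quantity `sup_{k ≥ 1} (1/ln n) · Σ_{x ∈ A ∩ [k, nk]} 1/x`. -/
noncomputable def lBDseq (A : Set ℕ) (n : ℕ) : ℝ :=
  ⨆ k : {k : ℕ // 1 ≤ k},
    (1 / Real.log n) * ∑ x ∈ Finset.Icc (k : ℕ) (n * k), Set.indicator A (fun x => 1 / (x : ℝ)) x

/-- The upper Banach logarithmic density, `ℓBD(A) = lim_{n→∞} lBDseq A n`.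
Since the limit always exists, it coincides with the `limsup`, which we use as definition. -/
noncomputable def lBD (A : Set ℕ) : ℝ :=
  Filter.limsup (lBDseq A) Filter.atTop

open scoped Classical in
/-- The quantity `sup_{k ≥ 1} |A ∩ [k, k+n]| / (n+1)`. -/
noncomputable def BDseq (A : Set ℕ) (n : ℕ) : ℝ :=
  ⨆ k : {k : ℕ // 1 ≤ k},
    (((Finset.Icc (k : ℕ) (k + n)).filter (· ∈ A)).card : ℝ) / ((n : ℝ) + 1)

/-- The upper Banach density, `BD(A) = lim_{n→∞} BDseq A n`.
Since the limit always exists, it coincides with the `limsup`, which we use as definition. -/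
noncomputable def BD (A : Set ℕ) : ℝ :=
  Filter.limsup (BDseq A) Filter.atTop


open scoped Classical

/-- If every window `[m, m+L]` contains at most `d*(L+1)` elements of `A`, then the sum of
`1/x` over `A ∩ [k, k+L]` is at most `d*(L+1)/k`. -/
lemma small_bound (A : Set ℕ) (L : ℕ) (d : ℝ)
    (h : ∀ m : ℕ, 1 ≤ m → (((Finset.Icc m (m + L)).filter (· ∈ A)).card : ℝ) ≤ d * (L + 1))
    (k : ℕ) (hk : 1 ≤ k) :
    ∑ x ∈ Finset.Icc k (k + L), Set.indicator A (fun x => 1 / (x : ℝ)) x ≤ d * (L + 1) / k := by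
  have hk0 : (0:ℝ) < k := by exact_mod_cast hk
  have h1 : ∑ x ∈ Finset.Icc k (k + L), Set.indicator A (fun x => 1 / (x : ℝ)) x
      ≤ ∑ x ∈ Finset.Icc k (k + L), Set.indicator A (fun _ => 1 / (k : ℝ)) x := by
    apply Finset.sum_le_sum
    intro x hx
    simp only [Finset.mem_Icc] at hx
    by_cases hxA : x ∈ A
    · simp only [Set.indicator_of_mem hxA]
      apply one_div_le_one_div_of_le hk0
      exact_mod_cast hx.1
    · simp [Set.indicator_of_notMem hxA]
  have h2 : ∑ x ∈ Finset.Icc k (k + L), Set.indicator A (fun _ => 1 / (k : ℝ)) x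
      = (((Finset.Icc k (k + L)).filter (· ∈ A)).card : ℝ) * (1 / k) := by
    rw [Finset.sum_indicator_eq_sum_filter]
    simp [Finset.sum_const, mul_comm]
  calc _ ≤ _ := h1
    _ = _ := h2
    _ ≤ d * (L + 1) * (1 / k) := by
        apply mul_le_mul_of_nonneg_right (h k hk)
        positivity
    _ = d * (L + 1) / k := by ring

/-- The key estimate: a window bound on `A` yields a logarithmic bound on partial sums of
`1/x` over `A`. -/
lemma main_bound (A : Set ℕ) (L : ℕ) (d : ℝ) (hd : 0 ≤ d)
    (h : ∀ m : ℕ, 1 ≤ m → (((Finset.Icc m (m + L)).filter (· ∈ A)).card : ℝ) ≤ d * (L + 1)) :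
    ∀ t k : ℕ, 1 ≤ k →
      ∑ x ∈ Finset.Icc k (k + t), Set.indicator A (fun x => 1 / (x : ℝ)) x
        ≤ d * (L + 1) / k + d * (Real.log ((k : ℝ) + t) - Real.log k) := by
  intro t
  induction t using Nat.strong_induction_on with
  | _ t ih =>
    intro k hk
    have hk0 : (0:ℝ) < k := by exact_mod_cast hk
    have hlog : Real.log (k:ℝ) ≤ Real.log ((k:ℝ) + t) := by
      apply Real.log_le_log hk0
      linarith [Nat.cast_nonneg (α := ℝ) t]
    by_cases ht : t ≤ L
    · -- base case: the whole range fits into a single window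
      have hsub : Finset.Icc k (k + t) ⊆ Finset.Icc k (k + L) :=
        Finset.Icc_subset_Icc_right (by omega)
      have h1 : ∑ x ∈ Finset.Icc k (k + t), Set.indicator A (fun x => 1 / (x : ℝ)) x
          ≤ ∑ x ∈ Finset.Icc k (k + L), Set.indicator A (fun x => 1 / (x : ℝ)) x := by
        apply Finset.sum_le_sum_of_subset_of_nonneg hsub
        intro x _ _
        apply Set.indicator_nonneg
        intro y _
        positivity
      have h2 := small_bound A L d h k hk
      nlinarith
    · -- inductive step: split off the first window
      push_neg at ht
      set k' := k + L + 1 with hk'def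
      set t' := t - (L + 1) with ht'def
      have hkt : k' + t' = k + t := by omega
      have hsplit : Finset.Icc k (k + t) = Finset.Icc k (k + L) ∪ Finset.Icc k' (k + t) := by
        ext x
        simp only [Finset.mem_Icc, Finset.mem_union]
        omega
      have hdisj : Disjoint (Finset.Icc k (k + L)) (Finset.Icc k' (k + t)) := by
        rw [Finset.disjoint_left]
        intro x hx hx'
        simp only [Finset.mem_Icc] at hx hx'
        omega
      have hIH := ih t' (by omega) k' (by omega)
      have hcast : ((k' : ℝ) + t') = (k : ℝ) + t := by
        exact_mod_cast congrArg (fun n : ℕ => (n : ℝ)) hkt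
      rw [hcast] at hIH
      rw [hkt] at hIH
      have hsum : ∑ x ∈ Finset.Icc k (k + t), Set.indicator A (fun x => 1 / (x : ℝ)) x
          = (∑ x ∈ Finset.Icc k (k + L), Set.indicator A (fun x => 1 / (x : ℝ)) x)
            + ∑ x ∈ Finset.Icc k' (k + t), Set.indicator A (fun x => 1 / (x : ℝ)) x := by
        rw [hsplit, Finset.sum_union hdisj]
      have hsmall := small_bound A L d h k hk
      -- key log inequality : (L+1)/k' ≤ log k' - log k
      have hk'0 : (0:ℝ) < k' := by
        have : (1:ℕ) ≤ k' := by omega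
        exact_mod_cast this
      have hkey : ((L:ℝ) + 1) / k' ≤ Real.log k' - Real.log k := by
        have hx : (0:ℝ) < (k:ℝ) / k' := by positivity
        have := Real.log_le_sub_one_of_pos hx
        rw [Real.log_div (ne_of_gt hk0) (ne_of_gt hk'0)] at this
        have hkk' : (k' : ℝ) = (k : ℝ) + (L + 1) := by
          rw [hk'def]; push_cast; ring
        have h1 : ((L:ℝ) + 1) / k' = 1 - (k:ℝ) / k' := by
          field_simp
          linarith [hkk']
        linarith
      have hmul : d * (((L:ℝ) + 1) / k') ≤ d * (Real.log k' - Real.log k) :=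
        mul_le_mul_of_nonneg_left hkey hd
      have heq : d * (L + 1) / k' = d * (((L:ℝ) + 1) / k') := by ring
      rw [hsum]
      calc _ ≤ (d * (L + 1) / k) + (d * (L + 1) / k' + d * (Real.log ((k:ℝ) + t) - Real.log k')) :=
              add_le_add hsmall hIH
        _ ≤ d * (L + 1) / k + d * (Real.log ((k : ℝ) + t) - Real.log k) := by
              rw [heq]; nlinarith [hmul]

lemma lBDseq_nonneg (A : Set ℕ) (n : ℕ) : 0 ≤ lBDseq A n := by
  apply Real.iSup_nonneg
  intro k
  apply mul_nonneg
  · have := Real.log_natCast_nonneg n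
    positivity
  · apply Finset.sum_nonneg
    intro x _
    apply Set.indicator_nonneg
    intro y _
    positivity

lemma lBDseq_le (A : Set ℕ) (L : ℕ) (d : ℝ) (hd : 0 ≤ d)
    (h : ∀ m : ℕ, 1 ≤ m → (((Finset.Icc m (m + L)).filter (· ∈ A)).card : ℝ) ≤ d * (L + 1))
    (n : ℕ) (hn : 2 ≤ n) :
    lBDseq A n ≤ d + d * (L + 1) / Real.log n := by
  have hlogn : 0 < Real.log n := by
    apply Real.log_pos
    exact_mod_cast by omega
  haveI : Nonempty {k : ℕ // 1 ≤ k} := ⟨⟨1, le_rfl⟩⟩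
  apply ciSup_le
  rintro ⟨k, hk⟩
  have hk0 : (0:ℝ) < k := by exact_mod_cast hk
  have hkle : k ≤ n * k := Nat.le_mul_of_pos_left k (by omega)
  have hnk : k + (n * k - k) = n * k := by omega
  have hS := main_bound A L d hd h (n * k - k) k hk
  rw [show (k : ℝ) + (n * k - k : ℕ) = ((n * k : ℕ) : ℝ) by
        exact_mod_cast congrArg (fun m : ℕ => (m : ℝ)) hnk] at hS
  rw [hnk] at hS
  have hlogmul : Real.log ((n * k : ℕ) : ℝ) = Real.log n + Real.log k := by
    push_cast
    rw [Real.log_mul (by exact_mod_cast (by omega : n ≠ 0)) (ne_of_gt hk0)]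
  rw [hlogmul] at hS
  have hSk : ∑ x ∈ Finset.Icc k (n * k), Set.indicator A (fun x => 1 / (x : ℝ)) x
      ≤ d * (L + 1) + d * Real.log n := by
    have : d * (L + 1) / k ≤ d * (L + 1) := by
      apply div_le_self (by positivity)
      exact_mod_cast hk
    linarith
  have hSnonneg : 0 ≤ ∑ x ∈ Finset.Icc k (n * k), Set.indicator A (fun x => 1 / (x : ℝ)) x := by
    apply Finset.sum_nonneg
    intro x _
    apply Set.indicator_nonneg
    intro y _
    positivity
  calc (1 / Real.log n) * ∑ x ∈ Finset.Icc (k : ℕ) (n * k),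
          Set.indicator A (fun x => 1 / (x : ℝ)) x
      ≤ (1 / Real.log n) * (d * (L + 1) + d * Real.log n) := by
        apply mul_le_mul_of_nonneg_left hSk (by positivity)
    _ = d + d * (L + 1) / Real.log n := by
        field_simp
        ring

lemma BDseq_nonneg (A : Set ℕ) (n : ℕ) : 0 ≤ BDseq A n := by
  apply Real.iSup_nonneg
  intro k
  positivity

lemma BDseq_le_one (A : Set ℕ) (n : ℕ) : BDseq A n ≤ 1 := by
  apply Real.iSup_le _ zero_le_one
  rintro ⟨k, hk⟩
  rw [div_le_one (by positivity)]
  have h1 : ((Finset.Icc k (k + n)).filter (· ∈ A)).card ≤ (Finset.Icc k (k + n)).card :=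
    Finset.card_filter_le _ _
  have h2 : (Finset.Icc k (k + n)).card = n + 1 := by
    rw [Nat.card_Icc]; omega
  rw [h2] at h1
  exact_mod_cast h1

lemma lBD_le_of_window (A : Set ℕ) (L : ℕ) (d : ℝ) (hd : 0 ≤ d)
    (h : ∀ m : ℕ, 1 ≤ m → (((Finset.Icc m (m + L)).filter (· ∈ A)).card : ℝ) ≤ d * (L + 1)) :
    lBD A ≤ d := by
  have hcb : IsCoboundedUnder (· ≤ ·) atTop (lBDseq A) :=
    isCoboundedUnder_le_of_le atTop (lBDseq_nonneg A)
  have key : ∀ δ : ℝ, 0 < δ → lBD A ≤ d + δ := by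
    intro δ hδ
    have hten : Tendsto (fun n : ℕ => d * (L + 1) / Real.log n) atTop (nhds 0) := by
      apply Tendsto.div_atTop tendsto_const_nhds
      exact Real.tendsto_log_atTop.comp tendsto_natCast_atTop_atTop
    have hev1 : ∀ᶠ n : ℕ in atTop, d * (L + 1) / Real.log n < δ :=
      hten.eventually_lt_const hδ
    have hev2 : ∀ᶠ n : ℕ in atTop, (2:ℕ) ≤ n := eventually_ge_atTop 2
    have hev : ∀ᶠ n : ℕ in atTop, lBDseq A n ≤ d + δ := by
      filter_upwards [hev1, hev2] with n h1 h2
      have := lBDseq_le A L d hd h n h2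
      linarith
    exact limsup_le_of_le hcb hev
  by_contra hcon
  push_neg at hcon
  have := key ((lBD A - d) / 2) (by linarith)
  linarith

theorem lBD_le_BD (A : Set ℕ) (hA : ∀ a ∈ A, 0 < a) : lBD A ≤ BD A := by
  apply le_of_forall_pos_le_add
  intro ε hε
  have hbdd : IsBoundedUnder (· ≤ ·) atTop (BDseq A) :=
    isBoundedUnder_of ⟨1, BDseq_le_one A⟩
  have hlt : limsup (BDseq A) atTop < BD A + ε := by
    have : BD A < BD A + ε := lt_add_of_pos_right _ hε
    exact this
  obtain ⟨L, hL⟩ := (eventually_lt_of_limsup_lt hlt hbdd).exists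
  set d := BDseq A L with hd_def
  have hd0 : 0 ≤ d := BDseq_nonneg A L
  have hwindow : ∀ m : ℕ, 1 ≤ m →
      (((Finset.Icc m (m + L)).filter (· ∈ A)).card : ℝ) ≤ d * (L + 1) := by
    intro m hm
    have hbdd' : BddAbove (Set.range fun k : {k : ℕ // 1 ≤ k} =>
        (((Finset.Icc (k : ℕ) ((k : ℕ) + L)).filter (· ∈ A)).card : ℝ) / ((L : ℝ) + 1)) := by
      refine ⟨1, ?_⟩
      rintro _ ⟨k, rfl⟩
      rw [div_le_one (by positivity)]
      have h1 : ((Finset.Icc (k : ℕ) ((k : ℕ) + L)).filter (· ∈ A)).card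
          ≤ (Finset.Icc (k : ℕ) ((k : ℕ) + L)).card := Finset.card_filter_le _ _
      have h2 : (Finset.Icc (k : ℕ) ((k : ℕ) + L)).card = L + 1 := by
        rw [Nat.card_Icc]; omega
      rw [h2] at h1
      exact_mod_cast h1
    have hle : (((Finset.Icc m (m + L)).filter (· ∈ A)).card : ℝ) / ((L : ℝ) + 1) ≤ d :=
      le_ciSup hbdd' ⟨m, hm⟩
    have hL1 : (0:ℝ) < (L : ℝ) + 1 := by positivity
    calc (((Finset.Icc m (m + L)).filter (· ∈ A)).card : ℝ)
        = ((((Finset.Icc m (m + L)).filter (· ∈ A)).card : ℝ) / ((L : ℝ) + 1)) * ((L:ℝ) + 1) := by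
          field_simp
      _ ≤ d * ((L:ℝ) + 1) := mul_le_mul_of_nonneg_right hle (le_of_lt hL1)
  calc lBD A ≤ d := lBD_le_of_window A L d hd0 hwindow
    _ ≤ BD A + ε := le_of_lt hL
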